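/- Let M be a K_par(G)-module. There is a K-linear bijection between the space Der_par(G,M) of partial derivations δ : K_par(G) → M and the space D(G,M) of maps d : G → M satisfying e_g·d(gh) = [g]·d(h) + e_{gh}·d(g), given by d(g) = δ([g]) and inversely δ(e[g]) = e·d(g). -/

import Mathlib

/-- A concrete model of Exel's inverse monoid `S(G)`: pairs `(E, g)` where `E` is a
finite subset of `G` containing `1` and `g`, with product `(E,g)(F,h) = (E ∪ gF, gh)`. -/
@[ext]
structure ExelS (G : Type*) [Group G] [DecidableEq G] where
  carrier : Finset G
  elt : G
  one_mem : (1 : G) ∈ carrier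
  elt_mem : elt ∈ carrier

namespace ExelS

variable {G : Type*} [Group G] [DecidableEq G]

instance : Mul (ExelS G) :=
  ⟨fun s t =>
    ⟨s.carrier ∪ t.carrier.image (s.elt * ·), s.elt * t.elt,
      Finset.mem_union_left _ s.one_mem,
      Finset.mem_union_right _ (Finset.mem_image_of_mem _ t.elt_mem)⟩⟩

instance : One (ExelS G) :=
  ⟨⟨{1}, 1, Finset.mem_singleton_self 1, Finset.mem_singleton_self 1⟩⟩

/-- The inverse in the inverse monoid `S(G)`. -/
instance : Inv (ExelS G) :=
  ⟨fun s =>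
    ⟨s.carrier.image (s.elt⁻¹ * ·), s.elt⁻¹,
      Finset.mem_image.2 ⟨s.elt, s.elt_mem, by simp⟩,
      Finset.mem_image.2 ⟨1, s.one_mem, by simp⟩⟩⟩

@[simp] lemma mul_carrier (s t : ExelS G) :
    (s * t).carrier = s.carrier ∪ t.carrier.image (s.elt * ·) := rfl

@[simp] lemma mul_elt (s t : ExelS G) : (s * t).elt = s.elt * t.elt := rfl

@[simp] lemma one_carrier : (1 : ExelS G).carrier = {1} := rfl

@[simp] lemma one_elt : (1 : ExelS G).elt = 1 := rfl

@[simp] lemma inv_carrier (s : ExelS G) :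
    s⁻¹.carrier = s.carrier.image (s.elt⁻¹ * ·) := rfl

@[simp] lemma inv_elt (s : ExelS G) : s⁻¹.elt = s.elt⁻¹ := rfl

instance : Monoid (ExelS G) where
  mul_assoc a b c := by
    ext x
    · simp only [mul_carrier, Finset.image_union, Finset.image_image, Finset.union_assoc,
        Finset.mem_union, Finset.mem_image, Function.comp]
      constructor <;> rintro (h | h | ⟨y, hy, rfl⟩) <;> simp_all [mul_assoc]
    · simp [mul_assoc]
  one_mul s := by
    ext x
    · simp only [mul_carrier, one_carrier, one_elt, one_mul, Finset.image_id']
      constructor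
      · intro h
        rcases Finset.mem_union.1 h with h | h
        · exact (Finset.mem_singleton.1 h) ▸ s.one_mem
        · exact h
      · exact fun h => Finset.mem_union_right _ h
    · simp
  mul_one s := by
    ext x
    · simp only [mul_carrier, one_carrier, Finset.image_singleton, mul_one]
      constructor
      · intro h
        rcases Finset.mem_union.1 h with h | h
        · exact h
        · exact (Finset.mem_singleton.1 h) ▸ s.elt_mem
      · exact fun h => Finset.mem_union_left _ h
    · simp

/-- The canonical generators `[g]` of Exel's monoid. -/
def br (g : G) : ExelS G := ⟨{1, g}, g, by simp, by simp⟩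

/-- The idempotents `e_g = [g][g⁻¹]`. -/
def eIdem (g : G) : ExelS G := br g * (br g⁻¹ : ExelS G)

end ExelS

noncomputable section

open ExelS MonoidAlgebra

variable {G : Type*} [Group G] [DecidableEq G] {K : Type*} [CommRing K]
  {M : Type*} [AddCommGroup M] [Module (MonoidAlgebra K (ExelS G)) M]
  [Module K M] [IsScalarTower K (MonoidAlgebra K (ExelS G)) M]
  [SMulCommClass K (MonoidAlgebra K (ExelS G)) M]

variable (K G M) in
/-- The `K`-space of partial derivations `K_par(G) → M`. -/
def DerPar : Submodule K (MonoidAlgebra K (ExelS G) →ₗ[K] M) where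
  carrier := {δ | ∀ s t : ExelS G,
    δ (of K (ExelS G) s * of K (ExelS G) t) =
      of K (ExelS G) s • δ (of K (ExelS G) t) +
        of K (ExelS G) ((s * t) * (s * t)⁻¹) • δ (of K (ExelS G) s)}
  add_mem' := by
    intro δ₁ δ₂ h1 h2 s t
    simp only [LinearMap.add_apply, h1 s t, h2 s t, smul_add]
    abel
  zero_mem' := by intro s t; simp
  smul_mem' := by
    intro k δ h s t
    simp only [LinearMap.smul_apply, h s t, smul_add, smul_comm k]

variable (K G M) in
/-- The `K`-space `D(G, M)` of maps `d : G → M` with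
`e_g·d(gh) = [g]·d(h) + e_{gh}·d(g)`. -/
def DPar : Submodule K (G → M) where
  carrier := {d | ∀ g h : G,
    of K (ExelS G) (eIdem g) • d (g * h) =
      of K (ExelS G) (br g) • d h + of K (ExelS G) (eIdem (g * h)) • d g}
  add_mem' := by
    intro d1 d2 h1 h2 g h
    simp only [Pi.add_apply, smul_add, h1 g h, h2 g h]
    abel
  zero_mem' := by intro g h; simp
  smul_mem' := by
    intro k d hd g h
    simp only [Pi.smul_apply, smul_comm _ k]
    rw [hd g h, smul_add]

namespace ExelS

variable {G : Type*} [Group G] [DecidableEq G]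

/-- The idempotent associated to a finite subset of `G`. -/
def idemE (E : Finset G) : ExelS G :=
  ⟨insert 1 E, 1, Finset.mem_insert_self 1 E, Finset.mem_insert_self 1 E⟩

@[simp] lemma idemE_carrier (E : Finset G) : (idemE E).carrier = insert 1 E := rfl
@[simp] lemma idemE_elt (E : Finset G) : (idemE E).elt = 1 := rfl

lemma idemE_mul_idemE (E F : Finset G) : idemE E * idemE F = idemE (E ∪ F) := by
  ext x
  · simp only [mul_carrier, idemE_carrier, idemE_elt, one_mul, Finset.mem_union,
      Finset.mem_insert, Finset.mem_image]
    constructor <;> intro h <;> aesop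
  · simp

lemma idemE_inv (E : Finset G) : (idemE E)⁻¹ = idemE E := by
  ext x
  · simp [Finset.mem_image]
  · simp

lemma mul_inv_self (s : ExelS G) : s * s⁻¹ = idemE s.carrier := by
  have h1 := s.one_mem
  ext x
  · simp only [mul_carrier, inv_carrier, Finset.mem_union, Finset.mem_image,
      idemE_carrier, Finset.mem_insert]
    constructor <;> intro h <;> aesop
  · simp

lemma eIdem_eq (g : G) : eIdem g = idemE {g} := by
  ext x
  · simp only [eIdem, br, mul_carrier, idemE_carrier, Finset.mem_union, Finset.mem_insert,
      Finset.mem_image, Finset.mem_singleton]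
    constructor <;> intro h <;> aesop
  · simp [eIdem, br]

lemma idemE_absorb {E F : Finset G} (h : F ⊆ E) : idemE E * idemE F = idemE E := by
  rw [idemE_mul_idemE, Finset.union_eq_left.2 h]

lemma idem_eq_idemE {e : ExelS G} (he : e * e = e) : e = idemE e.carrier := by
  have helt : e.elt = 1 := by
    have := congrArg elt he
    simp only [mul_elt] at this
    exact mul_left_cancel (a := e.elt) (by rw [this, mul_one])
  have h1 := e.one_mem
  ext x
  · simp only [idemE_carrier, Finset.mem_insert]
    constructor <;> intro h <;> aesop
  · simp [helt]

lemma decomp (s : ExelS G) : idemE s.carrier * br s.elt = s := by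
  have h1 := s.one_mem
  have h2 := s.elt_mem
  ext x
  · simp only [mul_carrier, idemE_carrier, idemE_elt, one_mul, br, Finset.mem_union,
      Finset.mem_insert, Finset.mem_image, Finset.mem_singleton]
    constructor <;> intro h <;> aesop
  · simp [br]

lemma s_mul_idemE (s t : ExelS G) :
    s * idemE t.carrier = idemE (s * t).carrier * br s.elt := by
  have h1 := s.one_mem
  have h2 := s.elt_mem
  ext x
  · simp only [mul_carrier, idemE_carrier, idemE_elt, one_mul, mul_one, br,
      Finset.mem_union, Finset.mem_insert, Finset.mem_image, Finset.mem_singleton]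
    constructor <;> intro h <;> aesop
  · simp [br]

lemma br_mul_br (g h : G) : br g * br h = eIdem g * br (g * h) := by
  rw [eIdem_eq]
  ext x
  · simp only [mul_carrier, br, idemE_carrier, idemE_elt, one_mul, mul_one, Finset.mem_union,
      Finset.mem_insert, Finset.mem_image, Finset.mem_singleton]
    constructor <;> intro h1 <;> aesop
  · simp [br]

lemma eIdem_mul_br_self (g : G) : eIdem g * br g = br g := by
  rw [eIdem_eq]
  ext x
  · simp only [mul_carrier, br, idemE_carrier, idemE_elt, one_mul, Finset.mem_union,
      Finset.mem_insert, Finset.mem_image, Finset.mem_singleton]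
    constructor <;> intro h <;> aesop
  · simp [br]

lemma eIdem_idem (g : G) : eIdem g * eIdem g = eIdem g := by
  rw [eIdem_eq, idemE_mul_idemE, Finset.union_self]

lemma idemE_idem (E : Finset G) : idemE E * idemE E = idemE E := by
  rw [idemE_mul_idemE, Finset.union_self]

lemma brmul_idem_eq (g h : G) :
    idemE (br g * br h).carrier = eIdem (g * h) * eIdem g := by
  rw [eIdem_eq, eIdem_eq, idemE_mul_idemE]
  ext x
  · simp only [idemE_carrier, mul_carrier, br, Finset.mem_insert, Finset.mem_union,
      Finset.mem_image, Finset.mem_singleton]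
    constructor <;> intro h1 <;> aesop
  · simp

lemma br_one : (br (1 : G)) = 1 := by
  ext x
  · simp [br]
  · simp [br]

lemma eIdem_one : eIdem (1 : G) = 1 := by
  rw [eIdem_eq]
  ext x
  · simp
  · simp

end ExelS

namespace ExelS

variable {G : Type*} [Group G] [DecidableEq G]

lemma idem_elt_eq_one {e : ExelS G} (he : e * e = e) : e.elt = 1 := by
  have := congrArg elt he
  simp only [mul_elt] at this
  exact mul_left_cancel (a := e.elt) (by rw [this, mul_one])

lemma idemE_br_carrier (g : G) : idemE (br g).carrier = eIdem g := by
  rw [eIdem_eq]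
  ext x
  · simp only [idemE_carrier, br, Finset.mem_insert, Finset.mem_singleton]
    tauto
  · simp

lemma idem_mul_br_carrier {e : ExelS G} (he : e * e = e) (g : G) :
    idemE (e * br g).carrier = e * eIdem g := by
  have h1 := idem_elt_eq_one he
  conv_rhs => rw [idem_eq_idemE he, eIdem_eq, idemE_mul_idemE]
  ext x
  · simp only [idemE_carrier, mul_carrier, br, h1, one_mul, Finset.mem_insert,
      Finset.mem_union, Finset.mem_image, Finset.mem_singleton]
    constructor <;> intro h <;> aesop
  · simp

lemma idem_mul_br_elt {e : ExelS G} (he : e * e = e) (g : G) : (e * br g).elt = g := by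
  simp [br, idem_elt_eq_one he]

end ExelS

lemma der_apply {δ : MonoidAlgebra K (ExelS G) →ₗ[K] M} (hδ : δ ∈ DerPar G K M)
    (s t : ExelS G) :
    δ (of K (ExelS G) (s * t)) =
      of K (ExelS G) s • δ (of K (ExelS G) t) +
        of K (ExelS G) (idemE (s * t).carrier) • δ (of K (ExelS G) s) := by
  have h := hδ s t
  rw [← map_mul, ExelS.mul_inv_self] at h
  exact h

lemma der_idem {δ : MonoidAlgebra K (ExelS G) →ₗ[K] M} (hδ : δ ∈ DerPar G K M)
    {e : ExelS G} (he : e * e = e) : δ (of K (ExelS G) e) = 0 := by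
  have h := der_apply hδ e e
  rw [he, ← idem_eq_idemE he] at h
  have h2 : of K (ExelS G) e • δ (of K (ExelS G) e) = 0 := by
    have h3 := congrArg (fun x => of K (ExelS G) e • x) h
    simp only [smul_add, smul_smul, ← map_mul, he] at h3
    exact (left_eq_add.1 h3)
  rw [h2, add_zero] at h
  exact h

lemma der_idem_mul {δ : MonoidAlgebra K (ExelS G) →ₗ[K] M} (hδ : δ ∈ DerPar G K M)
    {e : ExelS G} (he : e * e = e) (s : ExelS G) :
    δ (of K (ExelS G) (e * s)) = of K (ExelS G) e • δ (of K (ExelS G) s) := by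
  rw [der_apply hδ, der_idem hδ he, smul_zero, add_zero]

lemma eIdem_smul_der {δ : MonoidAlgebra K (ExelS G) →ₗ[K] M} (hδ : δ ∈ DerPar G K M)
    (g : G) :
    of K (ExelS G) (eIdem g) • δ (of K (ExelS G) (br g)) = δ (of K (ExelS G) (br g)) := by
  rw [← der_idem_mul hδ (eIdem_idem g), eIdem_mul_br_self]

lemma toD_mem {δ : MonoidAlgebra K (ExelS G) →ₗ[K] M} (hδ : δ ∈ DerPar G K M) :
    (fun g => δ (of K (ExelS G) (br g))) ∈ DPar G K M := by
  intro g h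
  have h1 : δ (of K (ExelS G) (br g * br h)) =
      of K (ExelS G) (br g) • δ (of K (ExelS G) (br h)) +
        of K (ExelS G) (eIdem (g * h) * eIdem g) • δ (of K (ExelS G) (br g)) := by
    rw [der_apply hδ, brmul_idem_eq]
  rw [br_mul_br, der_idem_mul hδ (eIdem_idem g), map_mul, mul_smul,
    eIdem_smul_der hδ] at h1
  exact h1

lemma d_one {d : G → M} (hd : d ∈ DPar G K M) (g : G) :
    of K (ExelS G) (eIdem g) • d 1 = 0 := by
  have h := hd 1 g
  simp only [eIdem_one, br_one, one_mul, map_one, one_smul] at h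
  exact left_eq_add.1 h

lemma d_neg {d : G → M} (hd : d ∈ DPar G K M) (g : G) :
    d g = -(of K (ExelS G) (br g) • d g⁻¹) := by
  have h := hd g g⁻¹
  simp only [mul_inv_cancel, eIdem_one, map_one, one_smul, d_one hd] at h
  exact eq_neg_of_add_eq_zero_left (by rw [add_comm]; exact h.symm)

lemma eIdem_smul_d {d : G → M} (hd : d ∈ DPar G K M) (g : G) :
    of K (ExelS G) (eIdem g) • d g = d g := by
  have h1 : of K (ExelS G) (br g⁻¹) • d g = -d g⁻¹ := by
    have := d_neg hd g⁻¹
    rw [inv_inv] at this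
    rw [this, neg_neg]
  calc of K (ExelS G) (eIdem g) • d g
      = of K (ExelS G) (br g) • (of K (ExelS G) (br g⁻¹) • d g) := by
        rw [eIdem, map_mul, mul_smul]
    _ = -(of K (ExelS G) (br g) • d g⁻¹) := by rw [h1, smul_neg]
    _ = d g := (d_neg hd g).symm

/-- The linear map `K_par(G) → M` associated to a function `d : G → M`. -/
def dToDer (d : G → M) : MonoidAlgebra K (ExelS G) →ₗ[K] M :=
  (Finsupp.linearCombination K fun s : ExelS G =>
    of K (ExelS G) (idemE s.carrier) • d s.elt) ∘ₗ (MonoidAlgebra.coeffLinearEquiv K).toLinearMap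

lemma dToDer_single (d : G → M) (a : ExelS G) (b : K) :
    dToDer d (MonoidAlgebra.single a b) = b • (of K (ExelS G) (idemE a.carrier) • d a.elt) :=
  by rw [dToDer, LinearMap.comp_apply]; exact Finsupp.linearCombination_single _ _ _

lemma dToDer_of (d : G → M) (s : ExelS G) :
    dToDer d (of K (ExelS G) s) = of K (ExelS G) (idemE s.carrier) • d s.elt := by
  rw [MonoidAlgebra.of_apply, dToDer_single, one_smul]

lemma dToDer_mem {d : G → M} (hd : d ∈ DPar G K M) : dToDer d ∈ DerPar G K M := by
  intro s t
  rw [← map_mul, ExelS.mul_inv_self, dToDer_of, dToDer_of, dToDer_of]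
  have hsub : s.carrier ⊆ (s * t).carrier := Finset.subset_union_left
  have hg : s.elt ∈ (s * t).carrier := Finset.mem_union_left _ s.elt_mem
  have hC1 : idemE (s * t).carrier * eIdem s.elt = idemE (s * t).carrier := by
    rw [eIdem_eq, idemE_absorb (Finset.singleton_subset_iff.2 hg)]
  have hgh : s.elt * t.elt ∈ (s * t).carrier := by
    rw [← mul_elt]; exact (s * t).elt_mem
  have hC2 : idemE (s * t).carrier * eIdem (s.elt * t.elt) = idemE (s * t).carrier := by
    rw [eIdem_eq, idemE_absorb (Finset.singleton_subset_iff.2 hgh)]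
  have key := congrArg (fun x => of K (ExelS G) (idemE (s * t).carrier) • x) (hd s.elt t.elt)
  simp only [smul_add, smul_smul, ← map_mul, hC1, hC2] at key
  rw [mul_elt, key, smul_smul, ← map_mul, s_mul_idemE, smul_smul, ← map_mul,
    idemE_absorb hsub, map_mul, mul_smul]

variable (K G M) in
/-- The forward linear map `Der_par(G,M) → D(G,M)`. -/
def toD : DerPar G K M →ₗ[K] DPar G K M where
  toFun δ := ⟨fun g => (δ : MonoidAlgebra K (ExelS G) →ₗ[K] M) (of K (ExelS G) (br g)),
    toD_mem δ.2⟩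
  map_add' δ₁ δ₂ := Subtype.ext (funext fun g => by
    simp [Submodule.coe_add, LinearMap.add_apply])
  map_smul' k δ := Subtype.ext (funext fun g => by
    simp [Submodule.coe_smul, LinearMap.smul_apply])

variable (K G M) in
/-- The inverse linear map `D(G,M) → Der_par(G,M)`. -/
def toDer : DPar G K M →ₗ[K] DerPar G K M where
  toFun d := ⟨dToDer d.1, dToDer_mem d.2⟩
  map_add' d₁ d₂ := Subtype.ext (MonoidAlgebra.lhom_ext' fun a => LinearMap.ext fun b => by
    show dToDer (K := K) (M := M) _ (MonoidAlgebra.single a b) =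
      dToDer (K := K) (M := M) _ (MonoidAlgebra.single a b) + dToDer (K := K) (M := M) _ (MonoidAlgebra.single a b)
    rw [dToDer_single, dToDer_single, dToDer_single]
    simp [Submodule.coe_add, Pi.add_apply, smul_add])
  map_smul' k d := Subtype.ext (MonoidAlgebra.lhom_ext' fun a => LinearMap.ext fun b => by
    show dToDer (K := K) (M := M) _ (MonoidAlgebra.single a b) =
      k • dToDer (K := K) (M := M) _ (MonoidAlgebra.single a b)
    rw [dToDer_single, dToDer_single]
    simp only [Submodule.coe_smul, Pi.smul_apply, RingHom.id_apply]
    rw [smul_comm (of K (ExelS G) (idemE a.carrier)) k, smul_comm b k])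

/-- There is a `K`-linear bijection between the partial derivations
`δ : K_par(G) → M` and the maps `d ∈ D(G,M)`, given by `d(g) = δ([g])`
with inverse `δ(e[g]) = e·d(g)`. -/
theorem derPar_linearEquiv_dPar :
    ∃ L : DerPar G K M ≃ₗ[K] DPar G K M,
      (∀ (δ : DerPar G K M) (g : G),
        (L δ : G → M) g = (δ : MonoidAlgebra K (ExelS G) →ₗ[K] M) (of K (ExelS G) (br g))) ∧
      ∀ (d : DPar G K M) (e : ExelS G) (g : G), e * e = e →
        (L.symm d : MonoidAlgebra K (ExelS G) →ₗ[K] M) (of K (ExelS G) (e * br g)) =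
          of K (ExelS G) e • (d : G → M) g := by
  have h1 : (toD G K M).comp (toDer G K M) = LinearMap.id := by
    apply LinearMap.ext
    intro d
    apply Subtype.ext
    funext g
    show dToDer (d : G → M) (of K (ExelS G) (br g)) = (d : G → M) g
    rw [dToDer_of, idemE_br_carrier]
    exact eIdem_smul_d d.2 g
  have h2 : (toDer G K M).comp (toD G K M) = LinearMap.id := by
    apply LinearMap.ext
    intro δ
    apply Subtype.ext
    apply MonoidAlgebra.lhom_ext'
    intro a
    apply LinearMap.ext
    intro b
    show dToDer _ (MonoidAlgebra.single a b) =
      (δ : MonoidAlgebra K (ExelS G) →ₗ[K] M) (MonoidAlgebra.single a b)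
    rw [dToDer_single]
    have hsingle : (MonoidAlgebra.single a b : MonoidAlgebra K (ExelS G)) =
        b • of K (ExelS G) a := by
      rw [MonoidAlgebra.of_apply, MonoidAlgebra.smul_single', mul_one]
    rw [hsingle, map_smul]
    congr 1
    show of K (ExelS G) (idemE a.carrier) •
        (δ : MonoidAlgebra K (ExelS G) →ₗ[K] M) (of K (ExelS G) (br a.elt)) = _
    rw [← der_idem_mul δ.2 (idemE_idem a.carrier), decomp]
  refine ⟨LinearEquiv.ofLinear (toD G K M) (toDer G K M) h1 h2, fun δ g => rfl, ?_⟩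
  intro d e g he
  rw [LinearEquiv.ofLinear_symm_apply]
  show dToDer (d : G → M) (of K (ExelS G) (e * br g)) = _
  rw [dToDer_of, idem_mul_br_carrier he, idem_mul_br_elt he, map_mul, mul_smul,
    eIdem_smul_d d.2]

end
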